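/- Let H be a real symmetric invertible d×d matrix and L a real d×d matrix with HL skew-symmetric. Suppose c is a real vector with (H + L)ᵀ positive definite in the sense that x·(H+L)x > 0 for all nonzero x. Then H itself is positive definite. -/

import Mathlib

open Matrix

theorem stmt_7 (d : ℕ) (H L : Matrix (Fin d) (Fin d) ℝ)
    (hH : H.IsHermitian) (hHinv : IsUnit H.det)
    (hHL : (H * L)ᵀ = -(H * L))
    (hpd : ∀ x : Fin d → ℝ, x ≠ 0 → 0 < x ⬝ᵥ (H + L).mulVec x) :
    H.PosDef := by
  have hinj : Function.Injective (H.mulVec) :=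
    Matrix.mulVec_injective_iff_isUnit.mpr ((Matrix.isUnit_iff_isUnit_det H).2 hHinv)
  have hHt : Hᵀ = H := hH
  have key : ∀ i, 0 < hH.eigenvalues i := by
    intro i
    set v : Fin d → ℝ := ⇑(hH.eigenvectorBasis i) with hv
    set t := hH.eigenvalues i with ht
    have hvne : v ≠ 0 := by
      have h0 := (hH.eigenvectorBasis).orthonormal.ne_zero i
      intro h
      apply h0
      ext j
      exact congrFun h j
    have hmul : H *ᵥ v = t • v := hH.mulVec_eigenvectorBasis i
    have htne : t ≠ 0 := by
      intro h0
      have hz : H *ᵥ v = H *ᵥ 0 := by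
        rw [hmul, h0, zero_smul, Matrix.mulVec_zero]
      exact hvne (hinj hz)
    have hvecmul : v ᵥ* H = t • v := by
      rw [← Matrix.mulVec_transpose, hHt, hmul]
    have hskew : v ⬝ᵥ (H * L) *ᵥ v = 0 := by
      have h1 : v ⬝ᵥ (H * L) *ᵥ v = -(v ⬝ᵥ (H * L) *ᵥ v) := by
        conv_lhs => rw [Matrix.dotProduct_mulVec, ← Matrix.mulVec_transpose, hHL,
          Matrix.neg_mulVec, neg_dotProduct, dotProduct_comm]
      linarith
    have hLv : v ⬝ᵥ L *ᵥ v = 0 := by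
      have h2 : v ⬝ᵥ (H * L) *ᵥ v = t * (v ⬝ᵥ L *ᵥ v) := by
        rw [← Matrix.mulVec_mulVec, Matrix.dotProduct_mulVec, hvecmul,
          smul_dotProduct, smul_eq_mul]
      rw [hskew] at h2
      exact (mul_eq_zero.mp h2.symm).resolve_left htne
    have hp := hpd v hvne
    rw [Matrix.add_mulVec, dotProduct_add, hLv, hmul, dotProduct_smul,
      smul_eq_mul, add_zero] at hp
    have hvv : 0 < v ⬝ᵥ v := by
      have := Matrix.dotProduct_self_star_pos_iff (v := v).mpr hvne
      simpa using this
    rcases mul_pos_iff.mp hp with h | h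
    · exact h.1
    · exact absurd hvv (not_lt.mpr h.2.le)
  have hpsd : H.PosSemidef := hH.posSemidef_iff_eigenvalues_nonneg.mpr fun i => (key i).le
  refine Matrix.posDef_iff_dotProduct_mulVec.mpr ⟨hH, fun x hx => ?_⟩
  have h0 := (Matrix.posSemidef_iff_dotProduct_mulVec.mp hpsd).2 x
  rcases lt_or_eq_of_le h0 with h | h
  · simpa using h
  · exfalso
    have : H *ᵥ x = 0 := (hpsd.dotProduct_mulVec_zero_iff x).mp h.symm
    exact hx (hinj (by simpa using this))
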